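/- Suppose 0 < μ < 1/‖A‖₂², where ‖A‖₂ is the operator norm of A from (ℝⁿ, ‖·‖₂) to (ℝ^m, ‖·‖₂). Let (z^k)_{k≥0} be a sequence in ℝⁿ such that for every k, z^{k+1} is a global minimizer over z ∈ ℝⁿ of z ↦ C^{1/2}_{λ,μ}(z, z^k), and suppose that for every k, C^{1/2}_λ(z^{k+1}) ≤ (1/μ)·C^{1/2}_{λ,μ}(z^{k+1}, z^k). Then the sequence is asymptotically regular: ‖z^{k+1} − z^k‖₂² → 0 as k → ∞. -/

import Mathlib

/-- `B_μ(y) = y + μ·Aᵀ(b − Ay)`. -/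
noncomputable def Bmu {m n : ℕ} (A : Matrix (Fin m) (Fin n) ℝ) (b : Fin m → ℝ)
    (μ : ℝ) (y : Fin n → ℝ) : Fin n → ℝ :=
  y + μ • (A.transpose.mulVec (b - A.mulVec y))

/-- The objective `C^θ_λ(z) = ‖Az − b‖₂² + λ·Σᵢ |zᵢ|^θ/(|zᵢ| + εᵢ)^{θ−p}`. -/
noncomputable def Cobj {m n : ℕ} (A : Matrix (Fin m) (Fin n) ℝ) (b : Fin m → ℝ)
    (lam p θ : ℝ) (ε : Fin n → ℝ) (z : Fin n → ℝ) : ℝ :=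
  ∑ j, ((A.mulVec z - b) j) ^ 2 +
    lam * ∑ i, |z i| ^ θ / (|z i| + ε i) ^ (θ - p)

/-- The surrogate functional
`C^θ_{λ,μ}(z,y) = μ‖Az − b‖₂² + λμ·Σᵢ |zᵢ|^θ/(|yᵢ| + εᵢ)^{θ−p} − μ‖Az − Ay‖₂² + ‖z − y‖₂²`. -/
noncomputable def Csur {m n : ℕ} (A : Matrix (Fin m) (Fin n) ℝ) (b : Fin m → ℝ)
    (lam μ p θ : ℝ) (ε : Fin n → ℝ) (z y : Fin n → ℝ) : ℝ :=
  μ * ∑ j, ((A.mulVec z - b) j) ^ 2 +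
    lam * μ * ∑ i, |z i| ^ θ / (|y i| + ε i) ^ (θ - p) -
    μ * ∑ j, ((A.mulVec z - A.mulVec y) j) ^ 2 +
    ∑ i, (z i - y i) ^ 2

/-- The operator norm of `A` from `(ℝⁿ, ‖·‖₂)` to `(ℝᵐ, ‖·‖₂)`. -/
noncomputable def l2OpNorm {m n : ℕ} (A : Matrix (Fin m) (Fin n) ℝ) : ℝ :=
  ‖LinearMap.toContinuousLinearMap (Matrix.toEuclideanLin A)‖

open Real Filter

namespace Stmt14Aux

/-! ### Operator norm bound -/

lemma sum_sq_mulVec_le {m n : ℕ} (A : Matrix (Fin m) (Fin n) ℝ) (v : Fin n → ℝ) :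
    ∑ j, (A.mulVec v j) ^ 2 ≤ (l2OpNorm A) ^ 2 * ∑ i, (v i) ^ 2 := by
  classical
  set x : EuclideanSpace ℝ (Fin n) := (WithLp.equiv 2 (Fin n → ℝ)).symm v with hx
  have hTx : (LinearMap.toContinuousLinearMap (Matrix.toEuclideanLin A)) x
      = (WithLp.equiv 2 (Fin m → ℝ)).symm (A.mulVec v) := by
    simp [Matrix.toEuclideanLin_apply, hx]
  have h1 : ‖(LinearMap.toContinuousLinearMap (Matrix.toEuclideanLin A)) x‖ ≤ l2OpNorm A * ‖x‖ :=
    (LinearMap.toContinuousLinearMap (Matrix.toEuclideanLin A)).le_opNorm x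
  have hnx : ‖x‖ = Real.sqrt (∑ i, (v i) ^ 2) := by
    rw [EuclideanSpace.norm_eq]
    congr 1
    exact Finset.sum_congr rfl fun i _ => by rw [Real.norm_eq_abs, sq_abs]; rfl
  have hny : ‖(LinearMap.toContinuousLinearMap (Matrix.toEuclideanLin A)) x‖
      = Real.sqrt (∑ j, (A.mulVec v j) ^ 2) := by
    rw [hTx, EuclideanSpace.norm_eq]
    congr 1
    exact Finset.sum_congr rfl fun j _ => by rw [Real.norm_eq_abs, sq_abs]; rfl
  have h2 : Real.sqrt (∑ j, (A.mulVec v j) ^ 2) ≤ l2OpNorm A * Real.sqrt (∑ i, (v i) ^ 2) := by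
    rw [← hnx, ← hny]; exact h1
  have hs1 : (0:ℝ) ≤ ∑ j, (A.mulVec v j) ^ 2 := Finset.sum_nonneg fun j _ => sq_nonneg _
  have hs2 : (0:ℝ) ≤ ∑ i, (v i) ^ 2 := Finset.sum_nonneg fun i _ => sq_nonneg _
  calc ∑ j, (A.mulVec v j) ^ 2 = (Real.sqrt (∑ j, (A.mulVec v j) ^ 2)) ^ 2 := (Real.sq_sqrt hs1).symm
    _ ≤ (l2OpNorm A * Real.sqrt (∑ i, (v i) ^ 2)) ^ 2 := by
        apply pow_le_pow_left₀ (Real.sqrt_nonneg _) h2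
    _ = (l2OpNorm A) ^ 2 * ∑ i, (v i) ^ 2 := by
        rw [mul_pow, Real.sq_sqrt hs2]

/-! ### Algebraic identities -/

lemma sum_sq_sub' {ι : Type*} [Fintype ι] (f g : ι → ℝ) :
    ∑ j, (f j - g j) ^ 2 = ∑ j, (f j)^2 - 2 * ∑ j, f j * g j + ∑ j, (g j)^2 := by
  simp only [sub_sq]
  rw [Finset.sum_add_distrib, Finset.sum_sub_distrib, Finset.mul_sum]
  simp [mul_assoc]

lemma adjoint_sum {m n : ℕ} (A : Matrix (Fin m) (Fin n) ℝ) (w : Fin m → ℝ) (v : Fin n → ℝ) :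
    ∑ i, v i * (A.transpose.mulVec w) i = ∑ j, (A.mulVec v) j * w j := by
  simp only [Matrix.mulVec, dotProduct, Matrix.transpose_apply, Finset.sum_mul,
    Finset.mul_sum]
  rw [Finset.sum_comm]
  exact Finset.sum_congr rfl fun j _ => Finset.sum_congr rfl fun i _ => by ring

lemma div_rpow_shift (x c p : ℝ) (hc : 0 < c) :
    x / c ^ ((1:ℝ)/2 - p) = c ^ (p - (1:ℝ)/2) * x := by
  rw [show ((1:ℝ)/2 - p) = -(p - (1:ℝ)/2) by ring, Real.rpow_neg hc.le, div_eq_mul_inv, inv_inv,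
    mul_comm]

lemma csur_decomp {m n : ℕ} (A : Matrix (Fin m) (Fin n) ℝ) (b : Fin m → ℝ)
    (lam μ p : ℝ) (ε : Fin n → ℝ) (hε : ∀ i, 0 < ε i) (z y : Fin n → ℝ) :
    Csur A b lam μ p ((1:ℝ)/2) ε z y
      = ∑ i, ((z i - Bmu A b μ y i) ^ 2
            + (lam * μ * (|y i| + ε i) ^ (p - (1:ℝ)/2)) * |z i| ^ ((1:ℝ)/2))
        + (μ * ∑ j, (b j)^2 - μ * ∑ j, (A.mulVec y j)^2 + ∑ i, (y i)^2
            - ∑ i, (Bmu A b μ y i)^2) := by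
  have hdiv : ∀ i : Fin n, |z i| ^ ((1:ℝ)/2) / (|y i| + ε i) ^ ((1:ℝ)/2 - p)
      = (|y i| + ε i) ^ (p - (1:ℝ)/2) * |z i| ^ ((1:ℝ)/2) := by
    intro i
    exact div_rpow_shift _ _ _ (lt_of_lt_of_le (hε i) (le_add_of_nonneg_left (abs_nonneg _)))
  have e1 : ∑ j, ((A.mulVec z - b) j)^2
      = ∑ j, (A.mulVec z j)^2 - 2 * ∑ j, A.mulVec z j * b j + ∑ j, (b j)^2 := by
    simpa [Pi.sub_apply] using sum_sq_sub' (A.mulVec z) b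
  have e2 : ∑ j, ((A.mulVec z - A.mulVec y) j)^2
      = ∑ j, (A.mulVec z j)^2 - 2 * ∑ j, A.mulVec z j * A.mulVec y j + ∑ j, (A.mulVec y j)^2 := by
    simpa [Pi.sub_apply] using sum_sq_sub' (A.mulVec z) (A.mulVec y)
  have e3 : ∑ i, (z i - y i)^2
      = ∑ i, (z i)^2 - 2 * ∑ i, z i * y i + ∑ i, (y i)^2 := sum_sq_sub' z y
  have e4 : ∑ i, (z i - Bmu A b μ y i)^2
      = ∑ i, (z i)^2 - 2 * ∑ i, z i * Bmu A b μ y i + ∑ i, (Bmu A b μ y i)^2 :=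
    sum_sq_sub' z (Bmu A b μ y)
  have e5 : ∑ i, z i * Bmu A b μ y i
      = ∑ i, z i * y i
        + μ * (∑ j, (A.mulVec z) j * b j - ∑ j, (A.mulVec z) j * (A.mulVec y) j) := by
    have h1 : ∀ i : Fin n, z i * Bmu A b μ y i
        = z i * y i + μ * (z i * (A.transpose.mulVec (b - A.mulVec y)) i) := by
      intro i
      have : Bmu A b μ y i = y i + μ * (A.transpose.mulVec (b - A.mulVec y)) i := by
        simp [Bmu]
      rw [this]; ring
    rw [Finset.sum_congr rfl fun i _ => h1 i, Finset.sum_add_distrib, ← Finset.mul_sum,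
      adjoint_sum A (b - A.mulVec y) z]
    congr 2
    rw [← Finset.sum_sub_distrib]
    exact Finset.sum_congr rfl fun j _ => by simp [Pi.sub_apply]; ring
  have hH : ∑ i, ((lam * μ * (|y i| + ε i) ^ (p - (1:ℝ)/2)) * |z i| ^ ((1:ℝ)/2))
      = lam * μ * ∑ i, ((|y i| + ε i) ^ (p - (1:ℝ)/2) * |z i| ^ ((1:ℝ)/2)) := by
    rw [Finset.mul_sum]
    exact Finset.sum_congr rfl fun i _ => by ring
  unfold Csur
  simp only [hdiv]
  rw [Finset.sum_add_distrib, hH, e1, e2, e3, e4, e5]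
  ring

lemma csur_self {m n : ℕ} (A : Matrix (Fin m) (Fin n) ℝ) (b : Fin m → ℝ)
    (lam μ p : ℝ) (ε : Fin n → ℝ) (w : Fin n → ℝ) :
    Csur A b lam μ p ((1:ℝ)/2) ε w w = μ * Cobj A b lam p ((1:ℝ)/2) ε w := by
  unfold Csur Cobj
  simp [sub_self]
  ring

lemma cobj_nonneg {m n : ℕ} (A : Matrix (Fin m) (Fin n) ℝ) (b : Fin m → ℝ)
    (lam p : ℝ) (ε : Fin n → ℝ) (hlam : 0 ≤ lam) (hε : ∀ i, 0 < ε i) (x : Fin n → ℝ) :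
    0 ≤ Cobj A b lam p ((1:ℝ)/2) ε x := by
  unfold Cobj
  apply add_nonneg (Finset.sum_nonneg fun j _ => sq_nonneg _)
  apply mul_nonneg hlam
  apply Finset.sum_nonneg fun i _ => ?_
  apply div_nonneg (Real.rpow_nonneg (abs_nonneg _) _) (Real.rpow_nonneg ?_ _)
  have := hε i
  positivity

lemma sum_update_eval {n : ℕ} (f : Fin n → ℝ → ℝ) (v : Fin n → ℝ) (i : Fin n) (x : ℝ) :
    ∑ j, f j (Function.update v i x j) = ∑ j, f j (v j) - f i (v i) + f i x := by
  classical
  have h1 : ∀ j, f j (Function.update v i x j)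
      = Function.update (fun j => f j (v j)) i (f i x) j := by
    intro j
    by_cases hj : j = i
    · subst hj; simp
    · simp [Function.update_of_ne hj]
  rw [Finset.sum_congr rfl fun j _ => h1 j, Finset.sum_update_of_mem (Finset.mem_univ i)]
  rw [Finset.sum_eq_sum_sdiff_singleton_add (Finset.mem_univ i) (fun j => f j (v j))]
  ring

lemma sum_update_coord {n : ℕ} (lam μ p : ℝ) (ε y B w : Fin n → ℝ) (i : Fin n) (x : ℝ) :
    ∑ j, ((Function.update w i x j - B j)^2
        + (lam * μ * (|y j| + ε j) ^ (p - (1:ℝ)/2)) * |Function.update w i x j| ^ ((1:ℝ)/2))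
      = ∑ j, ((w j - B j)^2 + (lam * μ * (|y j| + ε j) ^ (p - (1:ℝ)/2)) * |w j| ^ ((1:ℝ)/2))
        - ((w i - B i)^2 + (lam * μ * (|y i| + ε i) ^ (p - (1:ℝ)/2)) * |w i| ^ ((1:ℝ)/2))
        + ((x - B i)^2 + (lam * μ * (|y i| + ε i) ^ (p - (1:ℝ)/2)) * |x| ^ ((1:ℝ)/2)) :=
  sum_update_eval
    (fun j s => (s - B j)^2 + (lam * μ * (|y j| + ε j) ^ (p - (1:ℝ)/2)) * |s| ^ ((1:ℝ)/2)) w i x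

/-! ### One-dimensional analysis -/

lemma crit_eq (β c t : ℝ) (ht : t ≠ 0)
    (hm : ∀ x : ℝ, (t - β)^2 + c * |t| ^ ((1:ℝ)/2) ≤ (x - β)^2 + c * |x| ^ ((1:ℝ)/2)) :
    2*β*t = 2*t^2 + c * |t| ^ ((1:ℝ)/2) / 2 := by
  set g : ℝ → ℝ := fun x => (x - β)^2 + c * |x| ^ ((1:ℝ)/2) with hg
  have hloc : IsLocalMin g t := Filter.Eventually.of_forall hm
  have hsq : HasDerivAt (fun x : ℝ => (x - β)^2) (2*(t-β)) t := by
    simpa using ((hasDerivAt_id t).sub_const β).fun_pow 2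
  rcases ht.lt_or_gt with htneg | htpos
  · have h2 : HasDerivAt (fun x : ℝ => (-x) ^ ((1:ℝ)/2))
        (((1:ℝ)/2 * (-t) ^ ((1:ℝ)/2 - 1)) * (-1)) t := by
      have := (Real.hasDerivAt_rpow_const (p := (1:ℝ)/2)
        (Or.inl (neg_ne_zero.mpr ht))).comp t (hasDerivAt_neg t)
      simpa [Function.comp_def] using this
    have hd : HasDerivAt (fun x : ℝ => (x - β)^2 + c * ((-x) ^ ((1:ℝ)/2)))
        (2*(t-β) + c * (((1:ℝ)/2 * (-t) ^ ((1:ℝ)/2 - 1)) * (-1))) t := hsq.add (h2.const_mul c)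
    have hev : g =ᶠ[nhds t] (fun x : ℝ => (x - β)^2 + c * ((-x) ^ ((1:ℝ)/2))) := by
      filter_upwards [eventually_lt_nhds htneg] with x hx
      rw [hg]; simp only [abs_of_neg hx]
    have hgd : HasDerivAt g (2*(t-β) + c * (((1:ℝ)/2 * (-t) ^ ((1:ℝ)/2 - 1)) * (-1))) t :=
      hd.congr_of_eventuallyEq hev
    have hzero := hloc.hasDerivAt_eq_zero hgd
    have hntpos : (0:ℝ) < -t := by linarith
    have key : (-t) * (-t) ^ ((1:ℝ)/2 - 1) = (-t) ^ ((1:ℝ)/2) := by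
      nth_rewrite 1 [← Real.rpow_one (-t)]
      rw [← Real.rpow_add hntpos]; norm_num
    rw [abs_of_neg htneg]
    linear_combination (-t) * hzero + (c/2) * key
  · have h2 : HasDerivAt (fun x : ℝ => x ^ ((1:ℝ)/2)) ((1:ℝ)/2 * t ^ ((1:ℝ)/2 - 1)) t := by
      simpa using Real.hasDerivAt_rpow_const (p := (1:ℝ)/2) (Or.inl ht)
    have hd : HasDerivAt (fun x : ℝ => (x - β)^2 + c * (x ^ ((1:ℝ)/2)))
        (2*(t-β) + c * ((1:ℝ)/2 * t ^ ((1:ℝ)/2 - 1))) t := hsq.add (h2.const_mul c)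
    have hev : g =ᶠ[nhds t] (fun x : ℝ => (x - β)^2 + c * (x ^ ((1:ℝ)/2))) := by
      filter_upwards [eventually_gt_nhds htpos] with x hx
      rw [hg]; simp only [abs_of_pos hx]
    have hgd : HasDerivAt g (2*(t-β) + c * ((1:ℝ)/2 * t ^ ((1:ℝ)/2 - 1))) t :=
      hd.congr_of_eventuallyEq hev
    have hzero := hloc.hasDerivAt_eq_zero hgd
    have key : t * t ^ ((1:ℝ)/2 - 1) = t ^ ((1:ℝ)/2) := by
      nth_rewrite 1 [← Real.rpow_one t]
      rw [← Real.rpow_add htpos]; norm_num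
    rw [abs_of_pos htpos]
    linear_combination (-t) * hzero + (c/2) * key

lemma key32 (t : ℝ) (ht : t ≠ 0) : |t| ^ ((3:ℝ)/2) * |t| ^ ((1:ℝ)/2) = t^2 := by
  rw [← Real.rpow_add (abs_pos.mpr ht)]
  norm_num

lemma L3 (β c t : ℝ) (ht : t ≠ 0)
    (hm : ∀ x : ℝ, (t - β)^2 + c * |t| ^ ((1:ℝ)/2) ≤ (x - β)^2 + c * |x| ^ ((1:ℝ)/2)) :
    c ≤ 2 * |t| ^ ((3:ℝ)/2) := by
  have hcrit := crit_eq β c t ht hm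
  have h0 := hm 0
  rw [abs_zero, Real.zero_rpow (by norm_num : ((1:ℝ)/2) ≠ 0)] at h0
  have hT : (0:ℝ) < |t| ^ ((1:ℝ)/2) := Real.rpow_pos_of_pos (abs_pos.mpr ht) _
  have hkey := key32 t ht
  have h1 : c * |t| ^ ((1:ℝ)/2) / 2 ≤ t^2 := by nlinarith [h0, hcrit]
  have h2 : c / 2 * |t| ^ ((1:ℝ)/2) ≤ |t| ^ ((3:ℝ)/2) * |t| ^ ((1:ℝ)/2) := by
    rw [hkey]; linarith
  have := (mul_le_mul_iff_left₀ hT).mp h2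
  linarith

lemma L4 (β c t : ℝ) (ht : t ≠ 0)
    (hm : ∀ x : ℝ, (t - β)^2 + c * |t| ^ ((1:ℝ)/2) ≤ (x - β)^2 + c * |x| ^ ((1:ℝ)/2))
    (hm0 : ∀ x : ℝ, β^2 ≤ (x - β)^2 + c * |x| ^ ((1:ℝ)/2)) :
    2 * |t| ^ ((3:ℝ)/2) ≤ c := by
  have hcrit := crit_eq β c t ht hm
  have h0 := hm0 t
  have hT : (0:ℝ) < |t| ^ ((1:ℝ)/2) := Real.rpow_pos_of_pos (abs_pos.mpr ht) _
  have hkey := key32 t ht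
  have h1 : t^2 ≤ c * |t| ^ ((1:ℝ)/2) / 2 := by nlinarith [h0, hcrit]
  have h2 : |t| ^ ((3:ℝ)/2) * |t| ^ ((1:ℝ)/2) ≤ c / 2 * |t| ^ ((1:ℝ)/2) := by
    rw [hkey]; linarith
  have := (mul_le_mul_iff_left₀ hT).mp h2
  linarith

lemma L1pos (β c t₁ t₂ : ℝ) (h1 : 0 < t₁) (h2 : 0 < t₂) (hne : t₁ ≠ t₂)
    (hc1 : 2*β*t₁ = 2*t₁^2 + c * |t₁| ^ ((1:ℝ)/2) / 2)
    (hc2 : 2*β*t₂ = 2*t₂^2 + c * |t₂| ^ ((1:ℝ)/2) / 2)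
    (htie : (t₁ - β)^2 + c * |t₁| ^ ((1:ℝ)/2) = (t₂ - β)^2 + c * |t₂| ^ ((1:ℝ)/2)) :
    False := by
  rw [abs_of_pos h1] at hc1 htie
  rw [abs_of_pos h2] at hc2 htie
  have hapos : 0 < t₁ ^ ((1:ℝ)/2) := Real.rpow_pos_of_pos h1 _
  have hdpos : 0 < t₂ ^ ((1:ℝ)/2) := Real.rpow_pos_of_pos h2 _
  set a := t₁ ^ ((1:ℝ)/2) with ha
  set d := t₂ ^ ((1:ℝ)/2) with hd
  have ha2 : a^2 = t₁ := by
    rw [ha, ← Real.rpow_natCast (t₁ ^ ((1:ℝ)/2)) 2, ← Real.rpow_mul h1.le]; norm_num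
  have hd2 : d^2 = t₂ := by
    rw [hd, ← Real.rpow_natCast (t₂ ^ ((1:ℝ)/2)) 2, ← Real.rpow_mul h2.le]; norm_num
  rw [← ha2] at hc1 htie
  rw [← hd2] at hc2 htie
  have hand : a ≠ d := fun h => hne (by rw [← ha2, ← hd2, h])
  have hsub : a - d ≠ 0 := sub_ne_zero.mpr hand
  have e1 : (a - d) * (2*a^2*d^2*(a+d) - c/2*(a*d)) = 0 := by
    linear_combination a^2 * hc2 - d^2 * hc1
  have e2 : (a - d) * ((a+d)*(a^2+d^2) - c/2) = 0 := by
    linear_combination -htie - hc1 + hc2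
  have f1 : 2*a^2*d^2*(a+d) - c/2*(a*d) = 0 := by
    rcases mul_eq_zero.mp e1 with h | h
    · exact absurd h hsub
    · exact h
  have f2 : (a+d)*(a^2+d^2) - c/2 = 0 := by
    rcases mul_eq_zero.mp e2 with h | h
    · exact absurd h hsub
    · exact h
  have h9 : a*d*(a+d)*(a-d)^2 = 0 := by linear_combination a*d*f2 - f1
  have : 0 < a*d*(a+d)*(a-d)^2 := by
    have h5 : (0:ℝ) < (a-d)^2 := by positivity
    positivity
  linarith

lemma L1opp (β c t₁ t₂ : ℝ) (hc : 0 < c) (h1 : t₁ < 0) (h2 : 0 < t₂)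
    (hc1 : 2*β*t₁ = 2*t₁^2 + c * |t₁| ^ ((1:ℝ)/2) / 2)
    (hc2 : 2*β*t₂ = 2*t₂^2 + c * |t₂| ^ ((1:ℝ)/2) / 2) :
    False := by
  have hT1 : (0:ℝ) < |t₁| ^ ((1:ℝ)/2) := Real.rpow_pos_of_pos (abs_pos.mpr h1.ne) _
  have hT2 : (0:ℝ) < |t₂| ^ ((1:ℝ)/2) := Real.rpow_pos_of_pos (abs_pos.mpr h2.ne') _
  have hb1 : β < t₁ := by nlinarith [mul_pos hc hT1]
  have hb2 : t₂ < β := by nlinarith [mul_pos hc hT2]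
  linarith

lemma L1 (β c t₁ t₂ : ℝ) (hc : 0 < c) (h1 : t₁ ≠ 0) (h2 : t₂ ≠ 0) (hne : t₁ ≠ t₂)
    (hm1 : ∀ x : ℝ, (t₁ - β)^2 + c * |t₁| ^ ((1:ℝ)/2) ≤ (x - β)^2 + c * |x| ^ ((1:ℝ)/2))
    (hm2 : ∀ x : ℝ, (t₂ - β)^2 + c * |t₂| ^ ((1:ℝ)/2) ≤ (x - β)^2 + c * |x| ^ ((1:ℝ)/2)) :
    False := by
  have hcr1 := crit_eq β c t₁ h1 hm1
  have hcr2 := crit_eq β c t₂ h2 hm2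
  have htie : (t₁ - β)^2 + c * |t₁| ^ ((1:ℝ)/2) = (t₂ - β)^2 + c * |t₂| ^ ((1:ℝ)/2) :=
    le_antisymm (hm1 t₂) (hm2 t₁)
  rcases h1.lt_or_gt with hn1 | hp1 <;> rcases h2.lt_or_gt with hn2 | hp2
  · refine L1pos (-β) c (-t₁) (-t₂) (by linarith) (by linarith) (by simpa using hne) ?_ ?_ ?_
    · rw [abs_neg]; linear_combination hcr1
    · rw [abs_neg]; linear_combination hcr2
    · rw [abs_neg, abs_neg]; linear_combination htie
  · exact L1opp β c t₁ t₂ hc hn1 hp2 hcr1 hcr2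
  · exact L1opp β c t₂ t₁ hc hn2 hp1 hcr2 hcr1
  · exact L1pos β c t₁ t₂ hp1 hp2 hne hcr1 hcr2 htie

/-! ### Continuity -/

section cont
variable {m n : ℕ} {X : Type*} [TopologicalSpace X]

lemma cont_mulVec_app (A : Matrix (Fin m) (Fin n) ℝ) {f : X → Fin n → ℝ} (hf : Continuous f)
    (j : Fin m) : Continuous fun x => A.mulVec (f x) j := by
  simp only [Matrix.mulVec, dotProduct]
  exact continuous_finset_sum _ fun i _ => continuous_const.mul ((continuous_apply i).comp hf)

lemma cont_pen {f g : X → Fin n → ℝ} (hf : Continuous f) (hg : Continuous g)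
    (p : ℝ) (ε : Fin n → ℝ) (hε : ∀ i, 0 < ε i) :
    Continuous fun x => ∑ i, |f x i| ^ ((1:ℝ)/2) / (|g x i| + ε i) ^ ((1:ℝ)/2 - p) := by
  apply continuous_finset_sum _ fun i _ => ?_
  have hnum : Continuous fun x => |f x i| ^ ((1:ℝ)/2) :=
    (continuous_abs.comp ((continuous_apply i).comp hf)).rpow_const fun _ => Or.inr (by norm_num)
  have hbpos : ∀ x, (0:ℝ) < |g x i| + ε i :=
    fun x => lt_of_lt_of_le (hε i) (le_add_of_nonneg_left (abs_nonneg _))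
  have hden : Continuous fun x => (|g x i| + ε i) ^ ((1:ℝ)/2 - p) :=
    ((continuous_abs.comp ((continuous_apply i).comp hg)).add continuous_const).rpow_const
      fun x => Or.inl (hbpos x).ne'
  exact hnum.div hden fun x => (Real.rpow_pos_of_pos (hbpos x) _).ne'

lemma cont_fid (A : Matrix (Fin m) (Fin n) ℝ) (b : Fin m → ℝ) {f : X → Fin n → ℝ}
    (hf : Continuous f) : Continuous fun x => ∑ j, ((A.mulVec (f x) - b) j) ^ 2 :=
  continuous_finset_sum _ fun j _ => ((cont_mulVec_app A hf j).sub continuous_const).pow 2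

lemma cont_cobj (A : Matrix (Fin m) (Fin n) ℝ) (b : Fin m → ℝ)
    (lam p : ℝ) (ε : Fin n → ℝ) (hε : ∀ i, 0 < ε i) :
    Continuous (Cobj A b lam p ((1:ℝ)/2) ε) := by
  unfold Cobj
  exact (cont_fid A b continuous_id).add
    (continuous_const.mul (cont_pen continuous_id continuous_id p ε hε))

lemma tendsto_mulVec_app {m n : ℕ} (A : Matrix (Fin m) (Fin n) ℝ)
    {w : ℕ → Fin n → ℝ} {wl : Fin n → ℝ}
    (hw : ∀ i, Tendsto (fun j => w j i) atTop (nhds (wl i))) (jj : Fin m) :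
    Tendsto (fun j => A.mulVec (w j) jj) atTop (nhds (A.mulVec wl jj)) := by
  simp only [Matrix.mulVec, dotProduct]
  exact tendsto_finset_sum _ fun i _ => tendsto_const_nhds.mul (hw i)

lemma tendsto_csur {m n : ℕ} (A : Matrix (Fin m) (Fin n) ℝ) (b : Fin m → ℝ)
    (lam μ p : ℝ) (ε : Fin n → ℝ) (hε : ∀ i, 0 < ε i)
    {za ya : ℕ → Fin n → ℝ} {zl yl : Fin n → ℝ}
    (hz : ∀ i, Tendsto (fun j => za j i) atTop (nhds (zl i)))
    (hy : ∀ i, Tendsto (fun j => ya j i) atTop (nhds (yl i))) :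
    Tendsto (fun j => Csur A b lam μ p ((1:ℝ)/2) ε (za j) (ya j)) atTop
      (nhds (Csur A b lam μ p ((1:ℝ)/2) ε zl yl)) := by
  unfold Csur
  simp only [Pi.sub_apply]
  have h1 : Tendsto (fun j => ∑ jj, (A.mulVec (za j) jj - b jj)^2) atTop
      (nhds (∑ jj, (A.mulVec zl jj - b jj)^2)) :=
    tendsto_finset_sum _ fun jj _ =>
      ((tendsto_mulVec_app A hz jj).sub tendsto_const_nhds).pow 2
  have h2 : Tendsto (fun j => ∑ i, |za j i| ^ ((1:ℝ)/2) / (|ya j i| + ε i) ^ ((1:ℝ)/2 - p))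
      atTop (nhds (∑ i, |zl i| ^ ((1:ℝ)/2) / (|yl i| + ε i) ^ ((1:ℝ)/2 - p))) := by
    apply tendsto_finset_sum _ fun i _ => ?_
    have hbpos : (0:ℝ) < |yl i| + ε i :=
      lt_of_lt_of_le (hε i) (le_add_of_nonneg_left (abs_nonneg _))
    exact Tendsto.div
      ((hz i).abs.rpow_const (Or.inr (by norm_num)))
      (((hy i).abs.add tendsto_const_nhds).rpow_const (Or.inl hbpos.ne'))
      (Real.rpow_pos_of_pos hbpos _).ne'
  have h3 : Tendsto (fun j => ∑ jj, (A.mulVec (za j) jj - A.mulVec (ya j) jj)^2) atTop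
      (nhds (∑ jj, (A.mulVec zl jj - A.mulVec yl jj)^2)) :=
    tendsto_finset_sum _ fun jj _ =>
      ((tendsto_mulVec_app A hz jj).sub (tendsto_mulVec_app A hy jj)).pow 2
  have h4 : Tendsto (fun j => ∑ i, (za j i - ya j i)^2) atTop
      (nhds (∑ i, (zl i - yl i)^2)) :=
    tendsto_finset_sum _ fun i _ => ((hz i).sub (hy i)).pow 2
  exact (((tendsto_const_nhds.mul h1).add (tendsto_const_nhds.mul h2)).sub
    (tendsto_const_nhds.mul h3)).add h4

end cont

/-! ### Coordinate bound -/

lemma cobj_coord_bound {m n : ℕ} (A : Matrix (Fin m) (Fin n) ℝ) (b : Fin m → ℝ)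
    (lam p : ℝ) (ε : Fin n → ℝ) (hlam : 0 < lam) (hp : 0 < p)
    (hε : ∀ i, 0 < ε i) (C : ℝ) (x : Fin n → ℝ)
    (hx : Cobj A b lam p ((1:ℝ)/2) ε x ≤ C) (i : Fin n) :
    |x i| ≤ max (ε i) (((2:ℝ) ^ ((1:ℝ)/2) * C / lam) ^ p⁻¹) := by
  set t := |x i| with hti
  have ht0 : 0 ≤ t := abs_nonneg _
  have hεi := hε i
  have hbpos : (0:ℝ) < t + ε i := by linarith
  have hterm : ∀ j : Fin n, 0 ≤ |x j| ^ ((1:ℝ)/2) / (|x j| + ε j) ^ ((1:ℝ)/2 - p) := by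
    intro j
    apply div_nonneg (Real.rpow_nonneg (abs_nonneg _) _) (Real.rpow_nonneg ?_ _)
    have := hε j; positivity
  have hfid : 0 ≤ ∑ j, ((A.mulVec x - b) j) ^ 2 := Finset.sum_nonneg fun j _ => sq_nonneg _
  have hpen_i : lam * (t ^ ((1:ℝ)/2) / (t + ε i) ^ ((1:ℝ)/2 - p)) ≤ C := by
    have hsum : t ^ ((1:ℝ)/2) / (t + ε i) ^ ((1:ℝ)/2 - p)
        ≤ ∑ j, |x j| ^ ((1:ℝ)/2) / (|x j| + ε j) ^ ((1:ℝ)/2 - p) :=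
      Finset.single_le_sum (fun j _ => hterm j) (Finset.mem_univ i)
    have := mul_le_mul_of_nonneg_left hsum hlam.le
    unfold Cobj at hx
    linarith
  have hpen2 : t ^ ((1:ℝ)/2) * (t + ε i) ^ (p - (1:ℝ)/2) ≤ C / lam := by
    rw [← le_div_iff₀' hlam] at hpen_i
    calc t ^ ((1:ℝ)/2) * (t + ε i) ^ (p - (1:ℝ)/2)
        = t ^ ((1:ℝ)/2) / (t + ε i) ^ ((1:ℝ)/2 - p) := by
          rw [show (p - (1:ℝ)/2) = -((1:ℝ)/2 - p) by ring, Real.rpow_neg hbpos.le,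
            ← div_eq_mul_inv]
      _ ≤ C / lam := hpen_i
  by_cases hcase : t ≤ ε i
  · exact le_max_of_le_left hcase
  push_neg at hcase
  have htpos : 0 < t := lt_trans hεi hcase
  have a1 : t ^ p ≤ (t + ε i) ^ p := Real.rpow_le_rpow ht0 (by linarith) hp.le
  have a2 : (2*t) ^ (-((1:ℝ)/2)) ≤ (t + ε i) ^ (-((1:ℝ)/2)) := by
    rw [Real.rpow_neg (by positivity), Real.rpow_neg (by positivity)]
    apply inv_anti₀ (Real.rpow_pos_of_pos hbpos _)
    exact Real.rpow_le_rpow hbpos.le (by linarith) (by norm_num)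
  have hsplit : (t + ε i) ^ (p - (1:ℝ)/2) = (t + ε i) ^ p * (t + ε i) ^ (-((1:ℝ)/2)) := by
    rw [← Real.rpow_add hbpos]; ring_nf
  have hlow : (2:ℝ) ^ (-((1:ℝ)/2)) * t ^ p ≤ t ^ ((1:ℝ)/2) * (t + ε i) ^ (p - (1:ℝ)/2) := by
    have e : t ^ ((1:ℝ)/2) * (t ^ p * (2*t) ^ (-((1:ℝ)/2))) = (2:ℝ) ^ (-((1:ℝ)/2)) * t ^ p := by
      rw [Real.mul_rpow (by norm_num : (0:ℝ) ≤ 2) ht0]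
      rw [show t ^ ((1:ℝ)/2) * (t ^ p * ((2:ℝ) ^ (-((1:ℝ)/2)) * t ^ (-((1:ℝ)/2))))
        = (2:ℝ) ^ (-((1:ℝ)/2)) * (t ^ ((1:ℝ)/2) * t ^ (-((1:ℝ)/2)) * t ^ p) by ring]
      rw [← Real.rpow_add htpos]
      norm_num
    rw [hsplit, ← e]
    apply mul_le_mul_of_nonneg_left _ (Real.rpow_nonneg ht0 _)
    exact mul_le_mul a1 a2 (Real.rpow_nonneg (by positivity) _) (Real.rpow_nonneg hbpos.le _)
  have hfin : t ^ p ≤ (2:ℝ) ^ ((1:ℝ)/2) * C / lam := by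
    have h12 : (2:ℝ) ^ ((1:ℝ)/2) * (2:ℝ) ^ (-((1:ℝ)/2)) = 1 := by
      rw [← Real.rpow_add two_pos]; norm_num
    have := mul_le_mul_of_nonneg_left (le_trans hlow hpen2)
      (Real.rpow_nonneg (by norm_num : (0:ℝ) ≤ 2) ((1:ℝ)/2))
    calc t ^ p = (2:ℝ) ^ ((1:ℝ)/2) * ((2:ℝ) ^ (-((1:ℝ)/2)) * t ^ p) := by
          rw [← mul_assoc, h12, one_mul]
      _ ≤ (2:ℝ) ^ ((1:ℝ)/2) * (C / lam) := this
      _ = (2:ℝ) ^ ((1:ℝ)/2) * C / lam := by ring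
  apply le_max_of_le_right
  calc t = (t ^ p) ^ p⁻¹ := by
        rw [← Real.rpow_mul ht0, mul_inv_cancel₀ hp.ne', Real.rpow_one]
    _ ≤ ((2:ℝ) ^ ((1:ℝ)/2) * C / lam) ^ p⁻¹ :=
        Real.rpow_le_rpow (Real.rpow_nonneg ht0 _) hfin (by positivity)

end Stmt14Aux

set_option maxHeartbeats 6000000 in
open Stmt14Aux in
theorem stmt_14 {m n : ℕ} (A : Matrix (Fin m) (Fin n) ℝ) (b : Fin m → ℝ)
    (lam μ p : ℝ) (ε : Fin n → ℝ)
    (hlam : 0 < lam) (hp : p ∈ Set.Ioo (0 : ℝ) 1) (hε : ∀ i, 0 < ε i)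
    (hμ : 0 < μ) (hμ2 : μ < 1 / (l2OpNorm A) ^ 2)
    (z : ℕ → Fin n → ℝ)
    (hmin : ∀ k : ℕ, ∀ w : Fin n → ℝ,
      Csur A b lam μ p ((1 : ℝ) / 2) ε (z (k + 1)) (z k) ≤
        Csur A b lam μ p ((1 : ℝ) / 2) ε w (z k))
    (hdesc : ∀ k : ℕ,
      Cobj A b lam p ((1 : ℝ) / 2) ε (z (k + 1)) ≤
        (1 / μ) * Csur A b lam μ p ((1 : ℝ) / 2) ε (z (k + 1)) (z k)) :
    Filter.Tendsto (fun k : ℕ => ∑ i, (z (k + 1) i - z k i) ^ 2)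
      Filter.atTop (nhds 0) := by
  classical
  by_contra hcon
  obtain ⟨hp0, hp1⟩ := hp
  -- basic constants
  have hμN : μ * (l2OpNorm A) ^ 2 < 1 := by
    have hAnn : (0:ℝ) ≤ l2OpNorm A := norm_nonneg _
    rcases eq_or_lt_of_le hAnn with hA0 | hApos
    · rw [← hA0] at hμ2
      norm_num at hμ2
      linarith
    · exact (lt_div_iff₀ (by positivity)).mp hμ2
  -- abbreviations
  set T : ℕ → ℝ := fun k => Cobj A b lam p ((1:ℝ)/2) ε (z k) with hT
  set D : ℕ → ℝ := fun k => ∑ i, (z (k + 1) i - z k i) ^ 2 with hD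
  have hS_ub : ∀ k, Csur A b lam μ p ((1:ℝ)/2) ε (z (k+1)) (z k) ≤ μ * T k := by
    intro k
    have := hmin k (z k)
    rwa [csur_self] at this
  have hS_lb : ∀ k, μ * T (k+1) ≤ Csur A b lam μ p ((1:ℝ)/2) ε (z (k+1)) (z k) := by
    intro k
    have h := mul_le_mul_of_nonneg_left (hdesc k) hμ.le
    have h2 : μ * ((1/μ) * Csur A b lam μ p ((1:ℝ)/2) ε (z (k+1)) (z k))
        = Csur A b lam μ p ((1:ℝ)/2) ε (z (k+1)) (z k) := by field_simp
    rw [h2] at h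
    exact h
  have hTmono : ∀ k, T (k+1) ≤ T k := by
    intro k
    have h := le_trans (hS_lb k) (hS_ub k)
    exact le_of_mul_le_mul_left h hμ
  have hTanti : Antitone T := antitone_nat_of_succ_le hTmono
  have hT0 : ∀ k, 0 ≤ T k := fun k => cobj_nonneg A b lam p ε hlam.le hε (z k)
  set L : ℝ := ⨅ k, T k with hL
  have hTlim : Filter.Tendsto T Filter.atTop (nhds L) := by
    apply tendsto_atTop_ciInf hTanti
    exact ⟨0, by rintro y ⟨k, rfl⟩; exact hT0 k⟩
  have hTlim1 : Filter.Tendsto (fun k => T (k+1)) Filter.atTop (nhds L) :=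
    hTlim.comp (tendsto_add_atTop_nat 1)
  have hSlim : Filter.Tendsto (fun k => Csur A b lam μ p ((1:ℝ)/2) ε (z (k+1)) (z k))
      Filter.atTop (nhds (μ * L)) := by
    apply tendsto_of_tendsto_of_tendsto_of_le_of_le
      (hTlim1.const_mul μ) (hTlim.const_mul μ) hS_lb hS_ub
  -- extract δ and a bad subsequence
  have hDnn : ∀ k, 0 ≤ D k := fun k => Finset.sum_nonneg fun i _ => sq_nonneg _
  have hbad : ∃ δ > 0, ∃ᶠ k in Filter.atTop, δ ≤ D k := by
    rw [Metric.tendsto_atTop] at hcon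
    push_neg at hcon
    obtain ⟨δ, hδ, hh⟩ := hcon
    refine ⟨δ, hδ, Filter.frequently_atTop.mpr fun N => ?_⟩
    obtain ⟨k, hk, hdist⟩ := hh N
    refine ⟨k, hk, ?_⟩
    rw [Real.dist_eq, abs_of_nonneg (by simpa using hDnn k)] at hdist
    simpa using hdist
  obtain ⟨δ, hδ, hfreq⟩ := hbad
  obtain ⟨φ₁, hφ₁, hφ₁D⟩ := Filter.extraction_of_frequently_atTop hfreq
  -- boundedness and compactness
  set R : Fin n → ℝ := fun i => max (ε i) (((2:ℝ) ^ ((1:ℝ)/2) * T 0 / lam) ^ p⁻¹) with hR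
  have hbd : ∀ k i, |z k i| ≤ R i := by
    intro k i
    exact cobj_coord_bound A b lam p ε hlam hp0 hε (T 0) (z k) (hTanti (Nat.zero_le k)) i
  set K : Set (Fin n → ℝ) := Set.Icc (fun i => -(R i)) R with hK
  have hKc : IsCompact K := isCompact_Icc
  have hmem : ∀ k, z k ∈ K := by
    intro k
    constructor
    · intro i; exact (abs_le.mp (hbd k i)).1
    · intro i; exact (abs_le.mp (hbd k i)).2
  set q : ℕ → (Fin n → ℝ) × (Fin n → ℝ) := fun j => (z (φ₁ j), z (φ₁ j + 1)) with hq
  have hqmem : ∀ j, q j ∈ K ×ˢ K := fun j => ⟨hmem _, hmem _⟩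
  obtain ⟨⟨u, v⟩, -, φ₂, hφ₂, hconv⟩ := (hKc.prod hKc).tendsto_subseq hqmem
  set ψ : ℕ → ℕ := φ₁ ∘ φ₂ with hψdef
  have hψ : StrictMono ψ := hφ₁.comp hφ₂
  have hψtop : Filter.Tendsto ψ Filter.atTop Filter.atTop := hψ.tendsto_atTop
  have hψ1top : Filter.Tendsto (fun j => ψ j + 1) Filter.atTop Filter.atTop :=
    (tendsto_add_atTop_nat 1).comp hψtop
  have hpair : Filter.Tendsto (fun j => (z (ψ j), z (ψ j + 1))) Filter.atTop (nhds (u, v)) :=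
    hconv
  have hu : Filter.Tendsto (fun j => z (ψ j)) Filter.atTop (nhds u) :=
    (continuous_fst.tendsto (u, v)).comp hpair
  have hv : Filter.Tendsto (fun j => z (ψ j + 1)) Filter.atTop (nhds v) :=
    (continuous_snd.tendsto (u, v)).comp hpair
  have hSψ : Filter.Tendsto
      (fun j => Csur A b lam μ p ((1:ℝ)/2) ε (z (ψ j + 1)) (z (ψ j)))
      Filter.atTop (nhds (μ * L)) := hSlim.comp hψtop
  have hSψ1 : Filter.Tendsto
      (fun j => Csur A b lam μ p ((1:ℝ)/2) ε (z (ψ j + 1 + 1)) (z (ψ j + 1)))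
      Filter.atTop (nhds (μ * L)) := hSlim.comp hψ1top
  have hui : ∀ i, Filter.Tendsto (fun j => z (ψ j) i) Filter.atTop (nhds (u i)) :=
    fun i => tendsto_pi_nhds.mp hu i
  have hvi : ∀ i, Filter.Tendsto (fun j => z (ψ j + 1) i) Filter.atTop (nhds (v i)) :=
    fun i => tendsto_pi_nhds.mp hv i
  -- limit values
  have hcobj_cont := cont_cobj A b lam p ε hε
  have hCu : Cobj A b lam p ((1:ℝ)/2) ε u = L := by
    apply tendsto_nhds_unique ((hcobj_cont.tendsto u).comp hu)
    exact hTlim.comp hψtop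
  have hCv : Cobj A b lam p ((1:ℝ)/2) ε v = L := by
    apply tendsto_nhds_unique ((hcobj_cont.tendsto v).comp hv)
    exact hTlim.comp hψ1top
  have hCsur_vu : Csur A b lam μ p ((1:ℝ)/2) ε v u = μ * L := by
    have h1 : Filter.Tendsto (fun j => Csur A b lam μ p ((1:ℝ)/2) ε (z (ψ j + 1)) (z (ψ j)))
        Filter.atTop (nhds (Csur A b lam μ p ((1:ℝ)/2) ε v u)) :=
      tendsto_csur A b lam μ p ε hε hvi hui
    exact tendsto_nhds_unique h1 hSψ
  have hmin_u : ∀ w, μ * L ≤ Csur A b lam μ p ((1:ℝ)/2) ε w u := by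
    intro w
    have hcw : Filter.Tendsto (fun j => Csur A b lam μ p ((1:ℝ)/2) ε w (z (ψ j)))
        Filter.atTop (nhds (Csur A b lam μ p ((1:ℝ)/2) ε w u)) :=
      tendsto_csur A b lam μ p ε hε (fun i => tendsto_const_nhds) hui
    apply le_of_tendsto_of_tendsto hSψ hcw
    exact Filter.Eventually.of_forall fun j => hmin (ψ j) w
  have hmin_v : ∀ w, μ * L ≤ Csur A b lam μ p ((1:ℝ)/2) ε w v := by
    intro w
    have hcw : Filter.Tendsto (fun j => Csur A b lam μ p ((1:ℝ)/2) ε w (z (ψ j + 1)))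
        Filter.atTop (nhds (Csur A b lam μ p ((1:ℝ)/2) ε w v)) :=
      tendsto_csur A b lam μ p ε hε (fun i => tendsto_const_nhds) hvi
    apply le_of_tendsto_of_tendsto hSψ1 hcw
    exact Filter.Eventually.of_forall fun j => hmin (ψ j + 1) w
  have hDlimit : δ ≤ ∑ i, (v i - u i) ^ 2 := by
    have hcd : Filter.Tendsto (fun j => ∑ i, (z (ψ j + 1) i - z (ψ j) i) ^ 2)
        Filter.atTop (nhds (∑ i, (v i - u i) ^ 2)) :=
      tendsto_finset_sum _ fun i _ => (((hvi i).sub (hui i)).pow 2)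
    apply le_of_tendsto_of_tendsto (tendsto_const_nhds (x := δ)) hcd
    exact Filter.Eventually.of_forall fun j => hφ₁D (φ₂ j)
  -- per-coordinate minimality
  have hCuu : Csur A b lam μ p ((1:ℝ)/2) ε u u = μ * L := by rw [csur_self, hCu]
  have hCvv : Csur A b lam μ p ((1:ℝ)/2) ε v v = μ * L := by rw [csur_self, hCv]
  have hcoord : ∀ (y w : Fin n → ℝ), (∀ w', μ * L ≤ Csur A b lam μ p ((1:ℝ)/2) ε w' y) →
      Csur A b lam μ p ((1:ℝ)/2) ε w y = μ * L → ∀ (i : Fin n) (x : ℝ),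
      (w i - Bmu A b μ y i)^2 + (lam * μ * (|y i| + ε i) ^ (p - (1:ℝ)/2)) * |w i| ^ ((1:ℝ)/2)
        ≤ (x - Bmu A b μ y i)^2 + (lam * μ * (|y i| + ε i) ^ (p - (1:ℝ)/2)) * |x| ^ ((1:ℝ)/2) := by
    intro y w hmy hwy i x
    have h1 := hmy (Function.update w i x)
    rw [csur_decomp A b lam μ p ε hε _ y] at h1
    rw [csur_decomp A b lam μ p ε hε w y] at hwy
    rw [sum_update_coord lam μ p ε y (Bmu A b μ y) w i x] at h1
    linarith
  have hmu_u := hcoord u u hmin_u hCuu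
  have hmu_v := hcoord u v hmin_u hCsur_vu
  have hmv_v := hcoord v v hmin_v hCvv
  -- the star identity
  have hstar : ∑ i, (v i - u i)^2 - μ * ∑ j, ((A.mulVec v - A.mulVec u) j)^2
      = lam * μ * ∑ i, (|v i| ^ ((1:ℝ)/2)
          * ((|v i| + ε i) ^ (p - (1:ℝ)/2) - (|u i| + ε i) ^ (p - (1:ℝ)/2))) := by
    have he : Csur A b lam μ p ((1:ℝ)/2) ε v u = μ * Cobj A b lam p ((1:ℝ)/2) ε v := by
      rw [hCsur_vu, hCv]
    unfold Csur Cobj at he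
    have hPu : ∀ i : Fin n, |v i| ^ ((1:ℝ)/2) / (|u i| + ε i) ^ ((1:ℝ)/2 - p)
        = (|u i| + ε i) ^ (p - (1:ℝ)/2) * |v i| ^ ((1:ℝ)/2) := fun i =>
      div_rpow_shift _ _ _ (lt_of_lt_of_le (hε i) (le_add_of_nonneg_left (abs_nonneg _)))
    have hPv : ∀ i : Fin n, |v i| ^ ((1:ℝ)/2) / (|v i| + ε i) ^ ((1:ℝ)/2 - p)
        = (|v i| + ε i) ^ (p - (1:ℝ)/2) * |v i| ^ ((1:ℝ)/2) := fun i =>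
      div_rpow_shift _ _ _ (lt_of_lt_of_le (hε i) (le_add_of_nonneg_left (abs_nonneg _)))
    simp only [hPu, hPv] at he
    have hsplit : ∑ i, (|v i| ^ ((1:ℝ)/2)
          * ((|v i| + ε i) ^ (p - (1:ℝ)/2) - (|u i| + ε i) ^ (p - (1:ℝ)/2)))
        = ∑ i, ((|v i| + ε i) ^ (p - (1:ℝ)/2) * |v i| ^ ((1:ℝ)/2))
          - ∑ i, ((|u i| + ε i) ^ (p - (1:ℝ)/2) * |v i| ^ ((1:ℝ)/2)) := by
      rw [← Finset.sum_sub_distrib]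
      exact Finset.sum_congr rfl fun i _ => by ring
    rw [hsplit]
    linear_combination he
  -- positivity of the star LHS
  have hAd : ∑ j, ((A.mulVec v - A.mulVec u) j)^2 = ∑ j, (A.mulVec (v - u) j)^2 := by
    rw [Matrix.mulVec_sub]
  have hdd : ∑ i, ((v - u) i) ^ 2 = ∑ i, (v i - u i)^2 := by
    exact Finset.sum_congr rfl fun i _ => by rw [Pi.sub_apply]
  have hElb : (1 - μ * (l2OpNorm A)^2) * ∑ i, (v i - u i)^2
      ≤ ∑ i, (v i - u i)^2 - μ * ∑ j, ((A.mulVec v - A.mulVec u) j)^2 := by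
    have h1 : ∑ j, (A.mulVec (v - u) j)^2 ≤ (l2OpNorm A)^2 * ∑ i, ((v - u) i)^2 :=
      sum_sq_mulVec_le A (v - u)
    rw [hdd] at h1
    rw [hAd]
    nlinarith [mul_le_mul_of_nonneg_left h1 hμ.le]
  have hEpos : 0 < ∑ i, (v i - u i)^2 - μ * ∑ j, ((A.mulVec v - A.mulVec u) j)^2 := by
    have h2 : 0 < (1 - μ * (l2OpNorm A)^2) * ∑ i, (v i - u i)^2 := by
      apply mul_pos (by linarith) (lt_of_lt_of_le hδ hDlimit)
    linarith
  have hSsum : 0 < ∑ i, (|v i| ^ ((1:ℝ)/2)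
      * ((|v i| + ε i) ^ (p - (1:ℝ)/2) - (|u i| + ε i) ^ (p - (1:ℝ)/2))) := by
    by_contra hns
    push_neg at hns
    have : lam * μ * ∑ i, (|v i| ^ ((1:ℝ)/2)
        * ((|v i| + ε i) ^ (p - (1:ℝ)/2) - (|u i| + ε i) ^ (p - (1:ℝ)/2))) ≤ 0 :=
      mul_nonpos_of_nonneg_of_nonpos (by positivity) hns
    rw [← hstar] at this
    linarith
  -- a coordinate where u i = 0, v i ≠ 0, and the weights compare wrongly
  -- first: in all cases p ≤ 1/2 we contradict hSsum; p > 1/2 gives the special coordinate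
  have hcu_pos : ∀ i, 0 < lam * μ * (|u i| + ε i) ^ (p - (1:ℝ)/2) := by
    intro i
    have : (0:ℝ) < |u i| + ε i := lt_of_lt_of_le (hε i) (le_add_of_nonneg_left (abs_nonneg _))
    have := Real.rpow_pos_of_pos this (p - (1:ℝ)/2)
    positivity
  have hzero_or : ∀ i : Fin n, u i ≠ v i → u i = 0 ∨ v i = 0 := by
    intro i hne
    by_contra hcc
    push_neg at hcc
    exact L1 (Bmu A b μ u i) (lam * μ * (|u i| + ε i) ^ (p - (1:ℝ)/2)) (u i) (v i)
      (hcu_pos i) hcc.1 hcc.2 hne (fun x => hmu_u i x) (fun x => hmu_v i x)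
  rcases lt_trichotomy p ((1:ℝ)/2) with hplt | hpeq | hpgt
  · -- p < 1/2 : every summand is nonpositive
    have hterm : ∀ i : Fin n, |v i| ^ ((1:ℝ)/2)
        * ((|v i| + ε i) ^ (p - (1:ℝ)/2) - (|u i| + ε i) ^ (p - (1:ℝ)/2)) ≤ 0 := by
      intro i
      by_cases hvi : v i = 0
      · rw [hvi]
        simp [Real.zero_rpow (by norm_num : ((1:ℝ)/2) ≠ 0)]
      by_cases hne : u i = v i
      · rw [hne]; simp
      have hui : u i = 0 := by
        rcases hzero_or i hne with h | h
        · exact h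
        · exact absurd h hvi
      apply mul_nonpos_of_nonneg_of_nonpos (Real.rpow_nonneg (abs_nonneg _) _)
      have hb1 : (0:ℝ) < |u i| + ε i := lt_of_lt_of_le (hε i) (le_add_of_nonneg_left (abs_nonneg _))
      have hb2 : |u i| + ε i ≤ |v i| + ε i := by
        rw [hui, abs_zero]
        have := abs_nonneg (v i)
        linarith
      have := Real.rpow_le_rpow_of_nonpos hb1 hb2 (by linarith : p - (1:ℝ)/2 ≤ 0)
      linarith
    have : ∑ i, (|v i| ^ ((1:ℝ)/2)
        * ((|v i| + ε i) ^ (p - (1:ℝ)/2) - (|u i| + ε i) ^ (p - (1:ℝ)/2))) ≤ 0 :=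
      Finset.sum_nonpos fun i _ => hterm i
    linarith
  · -- p = 1/2 : all brackets vanish
    have : ∑ i, (|v i| ^ ((1:ℝ)/2)
        * ((|v i| + ε i) ^ (p - (1:ℝ)/2) - (|u i| + ε i) ^ (p - (1:ℝ)/2))) = 0 := by
      apply Finset.sum_eq_zero fun i _ => ?_
      rw [hpeq]
      simp
    linarith
  · -- p > 1/2 : get a coordinate with positive summand
    have hex : ∃ i : Fin n, 0 < |v i| ^ ((1:ℝ)/2)
        * ((|v i| + ε i) ^ (p - (1:ℝ)/2) - (|u i| + ε i) ^ (p - (1:ℝ)/2)) := by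
      by_contra hc
      push_neg at hc
      have : ∑ i, (|v i| ^ ((1:ℝ)/2)
          * ((|v i| + ε i) ^ (p - (1:ℝ)/2) - (|u i| + ε i) ^ (p - (1:ℝ)/2))) ≤ 0 :=
        Finset.sum_nonpos fun i _ => hc i
      linarith
    obtain ⟨i, hi⟩ := hex
    have hvi : v i ≠ 0 := by
      intro h
      rw [h] at hi
      simp [Real.zero_rpow (by norm_num : ((1:ℝ)/2) ≠ 0)] at hi
    have hbr : 0 < (|v i| + ε i) ^ (p - (1:ℝ)/2) - (|u i| + ε i) ^ (p - (1:ℝ)/2) := by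
      by_contra hb
      push_neg at hb
      have := mul_nonpos_of_nonneg_of_nonpos (Real.rpow_nonneg (abs_nonneg (v i)) ((1:ℝ)/2)) hb
      linarith
    have huv : |u i| < |v i| := by
      by_contra hb
      push_neg at hb
      have hb1 : (0:ℝ) ≤ |v i| + ε i := add_nonneg (abs_nonneg _) (hε i).le
      have := Real.rpow_le_rpow hb1 (by linarith : |v i| + ε i ≤ |u i| + ε i)
        (by linarith : (0:ℝ) ≤ p - (1:ℝ)/2)
      linarith
    have hne : u i ≠ v i := by
      intro h; rw [h] at huv; exact lt_irrefl _ huv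
    have hui : u i = 0 := by
      rcases hzero_or i hne with h | h
      · exact h
      · exact absurd h hvi
    -- now apply L4 to the u-problem and L3 to the v-problem at coordinate i
    have hm0 : ∀ x : ℝ, (Bmu A b μ u i)^2
        ≤ (x - Bmu A b μ u i)^2
          + (lam * μ * (|u i| + ε i) ^ (p - (1:ℝ)/2)) * |x| ^ ((1:ℝ)/2) := by
      intro x
      have h := hmu_u i x
      have e : (u i - Bmu A b μ u i)^2
          + (lam * μ * (|u i| + ε i) ^ (p - (1:ℝ)/2)) * |u i| ^ ((1:ℝ)/2)
          = (Bmu A b μ u i)^2 := by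
        rw [hui]
        simp [Real.zero_rpow (show ((1:ℝ)/2) ≠ 0 by norm_num)]
      rw [e] at h
      exact h
    have h4 : 2 * |v i| ^ ((3:ℝ)/2) ≤ lam * μ * (|u i| + ε i) ^ (p - (1:ℝ)/2) :=
      L4 (Bmu A b μ u i) _ (v i) hvi (fun x => hmu_v i x) hm0
    have h3 : lam * μ * (|v i| + ε i) ^ (p - (1:ℝ)/2) ≤ 2 * |v i| ^ ((3:ℝ)/2) :=
      L3 (Bmu A b μ v i) _ (v i) hvi (fun x => hmv_v i x)
    have hlt : lam * μ * (|u i| + ε i) ^ (p - (1:ℝ)/2)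
        < lam * μ * (|v i| + ε i) ^ (p - (1:ℝ)/2) := by
      apply mul_lt_mul_of_pos_left _ (by positivity : (0:ℝ) < lam * μ)
      apply Real.rpow_lt_rpow (add_nonneg (abs_nonneg _) (hε i).le)
      · rw [hui, abs_zero]
        have := abs_pos.mpr hvi
        linarith
      · linarith
    linarith
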